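/- Let s ∈ {1,2,3,4}, suppose the identity sequence id(k) = k belongs to D(A^s), and suppose (A^s id)(l) = β₀ + β₁ l for all l ∈ ℕ, where β₁ ≥ 1 and β₀ > 0. Let γ₁ = β₁^{1/s} (the positive real s-th root) and γ₀ = β₀ / (Σ_{k=0}^{s−1} γ₁^k). Then the adjacent regression is linear: (A id)(l) = γ₀ + γ₁ l for all l ∈ ℕ. -/

import Mathlib

open scoped BigOperators

noncomputable section

/-- Tail sum `q_l = Σ_{k ≥ l} p_k`. -/
def qtail (p : ℕ → ℝ) (l : ℕ) : ℝ := ∑' k, p (l + k)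

/-- The operator `A` on real sequences: `(A v)(l) = (1/q_l) Σ_{k=l}^∞ p_k v(k)`. -/
def opAR (p : ℕ → ℝ) (v : ℕ → ℝ) : ℕ → ℝ :=
  fun l => (1 / qtail p l) * ∑' k, p (l + k) * v (l + k)

/-- Membership in the domain `D(A) = {v : Σ_k p_k |v(k)| < ∞}` (real sequences). -/
def memDAR (p : ℕ → ℝ) (v : ℕ → ℝ) : Prop :=
  Summable fun k => p k * |v k|

/-- Membership in the domain `D(A^m) = {v : A^k v ∈ D(A) for k = 0,…,m-1}`. -/
def memDAiterR (p : ℕ → ℝ) (m : ℕ) (v : ℕ → ℝ) : Prop :=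
  ∀ k < m, memDAR p ((opAR p)^[k] v)

def Complex.abs : AbsoluteValue ℂ ℝ where
  toFun := fun z => ‖z‖
  map_mul' := norm_mul
  nonneg' := norm_nonneg
  eq_zero' := fun _ => norm_eq_zero
  add_le' := norm_add_le

lemma Complex.abs_ofReal (r : ℝ) : Complex.abs (r : ℂ) = |r| := Complex.norm_real r

lemma Complex.sq_abs (z : ℂ) : Complex.abs z ^ 2 = Complex.normSq z := Complex.sq_norm z

lemma summable_shift {f : ℕ → ℝ} (hf : Summable f) (l : ℕ) : Summable (fun k => f (l + k)) := by
  have := (summable_nat_add_iff (f := f) l).2 hf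
  simpa [add_comm] using this

lemma qtail_pos {p : ℕ → ℝ} (hp : ∀ k, 0 < p k) (hsp : Summable p) (l : ℕ) : 0 < qtail p l := by
  have hs := summable_shift hsp l
  have h0 : p (l + 0) ≤ qtail p l := hs.le_tsum 0 (fun j _ => (hp _).le)
  simp only [add_zero] at h0
  exact lt_of_lt_of_le (hp l) h0

lemma qtail_succ {p : ℕ → ℝ} (hsp : Summable p) (l : ℕ) : qtail p l = p l + qtail p (l + 1) := by
  have hs := summable_shift hsp l
  have := hs.tsum_eq_zero_add
  simpa [qtail, add_zero, add_assoc, add_comm 1] using this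

lemma qtail_antitone {p : ℕ → ℝ} (hp : ∀ k, 0 < p k) (hsp : Summable p) : Antitone (qtail p) := by
  apply antitone_nat_of_succ_le
  intro n
  have := qtail_succ hsp (p := p) n
  have := hp n
  linarith

lemma memDAR_summable_mul {p v : ℕ → ℝ} (hp : ∀ k, 0 < p k) (hv : memDAR p v) :
    Summable (fun k => p k * v k) := by
  refine summable_abs_iff.mp (hv.congr fun k => ?_)
  rw [abs_mul, abs_of_pos (hp k)]

lemma memDAR_summable_shift {p v : ℕ → ℝ} (hp : ∀ k, 0 < p k) (hv : memDAR p v) (l : ℕ) :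
    Summable (fun k => p (l + k) * v (l + k)) :=
  summable_shift (memDAR_summable_mul hp hv) l

lemma opAR_split {p v : ℕ → ℝ} (hp : ∀ k, 0 < p k) (hsp : Summable p) (hv : memDAR p v) (l : ℕ) :
    qtail p l * opAR p v l = p l * v l + qtail p (l + 1) * opAR p v (l + 1) := by
  have hq : qtail p l ≠ 0 := (qtail_pos hp hsp l).ne'
  have hq1 : qtail p (l+1) ≠ 0 := (qtail_pos hp hsp (l+1)).ne'
  have e1 : qtail p l * opAR p v l = ∑' k, p (l + k) * v (l + k) := by
    rw [opAR]; field_simp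
  have e2 : qtail p (l+1) * opAR p v (l+1) = ∑' k, p ((l+1) + k) * v ((l+1) + k) := by
    rw [opAR]; field_simp
  rw [e1, e2]
  have hs := memDAR_summable_shift hp hv l
  have h := hs.tsum_eq_zero_add
  simp only [add_zero] at h
  rw [h]
  congr 1
  apply tsum_congr
  intro k
  have : l + (k + 1) = l + 1 + k := by omega
  rw [this]

-- closure of memDAR under a*v + b*w + c
lemma memDAR_comb {p v w : ℕ → ℝ} (hp : ∀ k, 0 < p k) (hsp : Summable p)
    (hv : memDAR p v) (hw : memDAR p w) (a b c : ℝ) :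
    memDAR p (fun k => a * v k + b * w k + c) := by
  have hsum : Summable (fun k => |a| * (p k * |v k|) + (|b| * (p k * |w k|) + |c| * p k)) :=
    (hv.mul_left _).add ((hw.mul_left _).add (hsp.mul_left _))
  refine Summable.of_nonneg_of_le (fun k => ?_) (fun k => ?_) hsum
  · have := (hp k).le
    positivity
  · have h1 : |a * v k + b * w k + c| ≤ |a| * |v k| + |b| * |w k| + |c| := by
      calc |a * v k + b * w k + c| ≤ |a * v k + b * w k| + |c| := abs_add_le _ _
        _ ≤ |a * v k| + |b * w k| + |c| := by linarith [abs_add_le (a * v k) (b * w k)]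
        _ = |a| * |v k| + |b| * |w k| + |c| := by rw [abs_mul, abs_mul]
    have hpk := (hp k).le
    calc p k * |a * v k + b * w k + c| ≤ p k * (|a| * |v k| + |b| * |w k| + |c|) := by
          exact mul_le_mul_of_nonneg_left h1 hpk
      _ = |a| * (p k * |v k|) + (|b| * (p k * |w k|) + |c| * p k) := by ring

lemma opAR_comb {p v w : ℕ → ℝ} (hp : ∀ k, 0 < p k) (hsp : Summable p)
    (hv : memDAR p v) (hw : memDAR p w) (a b c : ℝ) (l : ℕ) :
    opAR p (fun k => a * v k + b * w k + c) l = a * opAR p v l + b * opAR p w l + c := by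
  have hq : qtail p l ≠ 0 := (qtail_pos hp hsp l).ne'
  have hsv := memDAR_summable_shift hp hv l
  have hsw := memDAR_summable_shift hp hw l
  have hsc : Summable (fun k => p (l + k)) := summable_shift hsp l
  have key : ∑' k, p (l + k) * (a * v (l + k) + b * w (l + k) + c)
      = a * (∑' k, p (l + k) * v (l + k)) + b * (∑' k, p (l + k) * w (l + k)) + c * qtail p l := by
    have e : ∀ k:ℕ, p (l + k) * (a * v (l + k) + b * w (l + k) + c)
        = a * (p (l + k) * v (l + k)) + (b * (p (l + k) * w (l + k)) + c * p (l + k)) := by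
      intro k; ring
    rw [tsum_congr e, Summable.tsum_add (hsv.mul_left a) ((hsw.mul_left b).add (hsc.mul_left c)),
      Summable.tsum_add (hsw.mul_left b) (hsc.mul_left c), tsum_mul_left, tsum_mul_left, tsum_mul_left]
    rw [qtail]; ring
  rw [opAR, key, opAR, opAR]
  field_simp
lemma le_of_sq_le_sq' {x y : ℝ} (hx : 0 ≤ x) (hy : 0 ≤ y) (h : x^2 ≤ y^2) : x ≤ y := by
  nlinarith [sq_nonneg (x + y), sq_nonneg (x - y)]

lemma eigen_step {p : ℕ → ℝ} (hp : ∀ k, 0 < p k) (hsp : Summable p)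
    (lam : ℂ) (hlam : lam ≠ 0) (hre : lam.re ≤ 0) (z : ℕ → ℂ)
    (hrec : ∀ l, (qtail p l : ℂ) * lam * z l
      = (p l : ℂ) * z l + (qtail p (l+1) : ℂ) * lam * z (l+1)) (l : ℕ) :
    qtail p l * Complex.abs (z l) ≤ qtail p (l+1) * Complex.abs (z (l+1)) := by
  have hq : 0 < qtail p l := qtail_pos hp hsp l
  have hq' : 0 < qtail p (l+1) := qtail_pos hp hsp (l+1)
  have hrearr : (qtail p (l+1) : ℂ) * lam * z (l+1)
      = ((qtail p l : ℂ) * lam - (p l : ℂ)) * z l := by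
    linear_combination -(hrec l)
  have habs := congrArg Complex.abs hrearr
  simp only [map_mul, Complex.abs_ofReal, abs_of_pos hq'] at habs
  have hlampos : 0 < Complex.abs lam := AbsoluteValue.pos Complex.abs hlam
  have hkey : qtail p l * Complex.abs lam
      ≤ Complex.abs ((qtail p l : ℂ) * lam - (p l : ℂ)) := by
    apply le_of_sq_le_sq' (by positivity) (AbsoluteValue.nonneg _ _)
    rw [mul_pow, Complex.sq_abs, Complex.sq_abs]
    simp only [Complex.normSq_apply, Complex.sub_re, Complex.mul_re, Complex.ofReal_re,
      Complex.ofReal_im, Complex.sub_im, Complex.mul_im]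
    have hpl := hp l
    nlinarith [mul_nonneg (mul_nonneg hq.le hpl.le) (neg_nonneg.2 hre), sq_nonneg (p l)]
  have h2 : qtail p l * Complex.abs lam * Complex.abs (z l)
      ≤ qtail p (l+1) * Complex.abs lam * Complex.abs (z (l+1)) := by
    rw [habs]
    exact mul_le_mul_of_nonneg_right hkey (AbsoluteValue.nonneg _ _)
  nlinarith [AbsoluteValue.nonneg Complex.abs (z l)]
lemma eigen_zero {p : ℕ → ℝ} (hp : ∀ k, 0 < p k) (hsp : Summable p)
    (lam : ℂ) (hlam : lam ≠ 0) (hre : lam.re ≤ 0) (z : ℕ → ℂ)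
    (hz : Summable fun k => p k * Complex.abs (z k))
    (hrec : ∀ l, (qtail p l : ℂ) * lam * z l
      = (p l : ℂ) * z l + (qtail p (l+1) : ℂ) * lam * z (l+1)) :
    ∀ l, z l = 0 := by
  intro l₀
  by_contra hz0
  have hmono : ∀ l, l₀ ≤ l → qtail p l₀ * Complex.abs (z l₀) ≤ qtail p l * Complex.abs (z l) := by
    intro l hl
    induction l, hl using Nat.le_induction with
    | base => exact le_refl _
    | succ n hn ih => exact ih.trans (eigen_step hp hsp lam hlam hre z hrec n)
  have hc : 0 < qtail p l₀ * Complex.abs (z l₀) :=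
    mul_pos (qtail_pos hp hsp l₀) (AbsoluteValue.pos Complex.abs hz0)
  set c := qtail p l₀ * Complex.abs (z l₀) with hcdef
  set f := fun k => p k * Complex.abs (z k) with hfdef
  have htail : ∀ i, l₀ ≤ i → c ≤ ∑' k, f (k + i) := by
    intro i hi
    have hqi : 0 < qtail p i := qtail_pos hp hsp i
    have hlow : ∀ k : ℕ, p (k + i) * (c / qtail p i) ≤ f (k + i) := by
      intro k
      have hki : l₀ ≤ k + i := hi.trans (Nat.le_add_left i k)
      have h1 := hmono (k + i) hki
      have hle : qtail p (k + i) ≤ qtail p i := qtail_antitone hp hsp (Nat.le_add_left i k)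
      have hA : (0:ℝ) ≤ Complex.abs (z (k + i)) := AbsoluteValue.nonneg _ _
      have hdiv : c / qtail p i ≤ Complex.abs (z (k + i)) := by
        rw [div_le_iff₀ hqi]
        calc c ≤ qtail p (k + i) * Complex.abs (z (k + i)) := h1
          _ ≤ qtail p i * Complex.abs (z (k + i)) := mul_le_mul_of_nonneg_right hle hA
          _ = Complex.abs (z (k + i)) * qtail p i := mul_comm _ _
      exact mul_le_mul_of_nonneg_left hdiv (hp _).le
    have hsum1 : Summable (fun k => p (k + i) * (c / qtail p i)) :=
      ((summable_nat_add_iff i).2 hsp).mul_right _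
    have hsum2 : Summable (fun k => f (k + i)) := (summable_nat_add_iff i).2 hz
    have := Summable.tsum_le_tsum hlow hsum1 hsum2
    calc c = (∑' k, p (k + i)) * (c / qtail p i) := by
          rw [show (∑' k, p (k + i)) = qtail p i from tsum_congr (fun k => by rw [add_comm])]
          field_simp
      _ = ∑' k, p (k + i) * (c / qtail p i) := (tsum_mul_right).symm
      _ ≤ ∑' k, f (k + i) := this
  have hlim := tendsto_sum_nat_add f
  have : c ≤ 0 := by
    apply ge_of_tendsto hlim
    filter_upwards [Filter.eventually_ge_atTop l₀] with i hi
    exact htail i hi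
  linarith
lemma memDAR_congr {p v w : ℕ → ℝ} (h : ∀ k, v k = w k) (hv : memDAR p v) : memDAR p w :=
  Summable.congr hv (fun k => by rw [h k])

lemma ofReal_memDAR_summable {p v : ℕ → ℝ} (hv : memDAR p v) :
    Summable fun k => p k * Complex.abs ((v k : ℝ) : ℂ) :=
  hv.congr fun k => by rw [Complex.abs_ofReal]

lemma solve_s2 {p : ℕ → ℝ} (hp : ∀ k, 0 < p k) (hsp : Summable p)
    {β₁ γ : ℝ} (hγ1 : 1 ≤ γ) (hγpow : γ ^ 2 = β₁) {h0 h1 : ℕ → ℝ}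
    (m0 : memDAR p h0) (m1 : memDAR p h1)
    (R0 : ∀ l, qtail p l * h1 l = p l * h0 l + qtail p (l+1) * h1 (l+1))
    (Rc : ∀ l, qtail p l * (β₁ * h0 l) = p l * h1 l + qtail p (l+1) * (β₁ * h0 (l+1)))
    (G : ∀ l, γ * h0 l + h1 l = 0) : ∀ l, h0 l = 0 := by
  have hγ0 : (0:ℝ) < γ := lt_of_lt_of_le one_pos hγ1
  have mw : memDAR p (fun l => -γ * h0 l + h1 l) :=
    memDAR_congr (fun k => by ring) (memDAR_comb hp hsp m0 m1 (-γ) 1 0)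
  have hzero := eigen_zero hp hsp (-(γ:ℂ)) (by simp [hγ0.ne']) (by simp [hγ0.le])
      (fun l => ((-γ * h0 l + h1 l : ℝ) : ℂ)) (ofReal_memDAR_summable mw) ?_
  · intro l
    have h1z := hzero l
    rw [Complex.ofReal_eq_zero] at h1z
    have := G l
    nlinarith
  · intro l
    have r0 := R0 l
    have rc := Rc l
    have c0 : ((qtail p l * h1 l : ℝ) : ℂ) = ((p l * h0 l + qtail p (l+1) * h1 (l+1) : ℝ) : ℂ) := by
      exact congrArg Complex.ofReal r0
    have cc : ((qtail p l * (β₁ * h0 l) : ℝ) : ℂ)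
        = ((p l * h1 l + qtail p (l+1) * (β₁ * h0 (l+1)) : ℝ) : ℂ) := by
      exact congrArg Complex.ofReal rc
    have hγc : ((γ:ℝ):ℂ)^2 = ((β₁:ℝ):ℂ) := by exact_mod_cast congrArg Complex.ofReal hγpow
    push_cast at c0 cc ⊢
    linear_combination (-(γ:ℂ)) * c0 + cc
      + ((qtail p l : ℂ) * (h0 l : ℂ) - (qtail p (l+1) : ℂ) * (h0 (l+1) : ℂ)) * hγc
lemma summable_p_abs_add {p : ℕ → ℝ} {f g : ℕ → ℂ} (hp : ∀ k, 0 < p k)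
    (hf : Summable fun k => p k * Complex.abs (f k))
    (hg : Summable fun k => p k * Complex.abs (g k)) :
    Summable fun k => p k * Complex.abs (f k + g k) := by
  refine Summable.of_nonneg_of_le (fun k => mul_nonneg (hp k).le (AbsoluteValue.nonneg _ _)) (fun k => ?_) (hf.add hg)
  have h1 := Complex.abs.add_le (f k) (g k)
  have h2 := (hp k).le
  calc p k * Complex.abs (f k + g k) ≤ p k * (Complex.abs (f k) + Complex.abs (g k)) :=
        mul_le_mul_of_nonneg_left h1 h2
    _ = p k * Complex.abs (f k) + p k * Complex.abs (g k) := by ring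

lemma summable_p_abs_smul {p : ℕ → ℝ} {f : ℕ → ℂ} (c : ℂ)
    (hf : Summable fun k => p k * Complex.abs (f k)) :
    Summable fun k => p k * Complex.abs (c * f k) := by
  refine Summable.congr (hf.mul_left (Complex.abs c)) fun k => ?_
  rw [map_mul]; ring

lemma solve_s3 {p : ℕ → ℝ} (hp : ∀ k, 0 < p k) (hsp : Summable p)
    {β₁ γ : ℝ} (hγ1 : 1 ≤ γ) (hγpow : γ ^ 3 = β₁) {h0 h1 h2 : ℕ → ℝ}
    (m0 : memDAR p h0) (m1 : memDAR p h1) (m2 : memDAR p h2)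
    (R0 : ∀ l, qtail p l * h1 l = p l * h0 l + qtail p (l+1) * h1 (l+1))
    (R1 : ∀ l, qtail p l * h2 l = p l * h1 l + qtail p (l+1) * h2 (l+1))
    (Rc : ∀ l, qtail p l * (β₁ * h0 l) = p l * h2 l + qtail p (l+1) * (β₁ * h0 (l+1)))
    (G : ∀ l, γ^2 * h0 l + γ * h1 l + h2 l = 0) : ∀ l, h0 l = 0 := by
  have hγ0 : (0:ℝ) < γ := lt_of_lt_of_le one_pos hγ1
  set t : ℝ := Real.sqrt 3 / 2 with htdef
  have ht0 : 0 < t := by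
    have : (0:ℝ) < Real.sqrt 3 := Real.sqrt_pos.2 (by norm_num)
    rw [htdef]; linarith
  have ht2 : t ^ 2 = 3 / 4 := by
    rw [htdef, div_pow, Real.sq_sqrt] <;> norm_num
  have htc : ((t:ℝ):ℂ) ^ 2 = 3 / 4 := by
    rw [← Complex.ofReal_pow, ht2]; norm_num
  set ω : ℂ := -(1/2) + (t:ℝ) * Complex.I with hωdef
  have hquad : ω ^ 2 + ω + 1 = 0 := by
    rw [hωdef]
    linear_combination ((t:ℝ):ℂ)^2 * Complex.I_sq - htc
  set lam : ℂ := (γ:ℝ) * ω with hlamdef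
  have hγ3c : ((γ:ℝ):ℂ) ^ 3 = ((β₁:ℝ):ℂ) := by exact_mod_cast congrArg Complex.ofReal hγpow
  have hω3 : ω ^ 3 = 1 := by linear_combination (ω - 1) * hquad
  have hlam3 : lam ^ 3 = ((β₁:ℝ):ℂ) := by
    rw [hlamdef]
    linear_combination ((γ:ℝ):ℂ)^3 * hω3 + hγ3c
  have hlamne : lam ≠ 0 := by
    rw [hlamdef, hωdef]
    simp only [ne_eq, mul_eq_zero, Complex.ofReal_eq_zero, not_or]
    constructor
    · exact hγ0.ne'
    · intro h
      have := congrArg Complex.im h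
      simp at this
      exact ht0.ne' this
  have hre : lam.re ≤ 0 := by
    have : lam.re = γ * (-(1/2)) := by
      rw [hlamdef, hωdef]
      simp [Complex.mul_re]
    rw [this]; nlinarith
  set z : ℕ → ℂ := fun l => lam^2 * ((h0 l : ℝ):ℂ) + lam * ((h1 l : ℝ):ℂ) + ((h2 l : ℝ):ℂ)
    with hzdef
  have hzsum : Summable fun k => p k * Complex.abs (z k) := by
    apply summable_p_abs_add hp
    apply summable_p_abs_add hp
    · exact summable_p_abs_smul _ (ofReal_memDAR_summable m0)
    · exact summable_p_abs_smul _ (ofReal_memDAR_summable m1)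
    · exact ofReal_memDAR_summable m2
  have hzero := eigen_zero hp hsp lam hlamne hre z hzsum ?_
  · intro l
    have e1 := hzero l
    have e2 := congrArg (starRingEnd ℂ) (hzero l)
    rw [hzdef] at e1 e2
    simp only [map_add, map_mul, map_pow, Complex.conj_ofReal, map_zero] at e2
    set μ : ℂ := (starRingEnd ℂ) lam with hμdef
    have e3 : ((γ:ℝ):ℂ)^2 * ((h0 l:ℝ):ℂ) + ((γ:ℝ):ℂ) * ((h1 l:ℝ):ℂ) + ((h2 l:ℝ):ℂ) = 0 := by
      exact_mod_cast congrArg Complex.ofReal (G l)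
    have hμval : μ = (γ:ℝ) * (-(1/2) - (t:ℝ) * Complex.I) := by
      rw [hμdef, hlamdef, hωdef]
      simp only [map_mul, map_add, map_neg, map_div₀, map_one, map_ofNat,
        Complex.conj_ofReal, Complex.conj_I, map_one]
      ring
    have h12 : lam - μ ≠ 0 := by
      rw [hμval, hlamdef, hωdef]
      intro h
      have := congrArg Complex.im h
      simp [Complex.mul_im] at this
      rcases this with h' | h'
      · exact hγ0.ne' h'
      · exact ht0.ne' h'
    have h13 : lam - (γ:ℝ) ≠ 0 := by
      rw [hlamdef, hωdef]
      intro h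
      have := congrArg Complex.re h
      simp [Complex.mul_re] at this
      nlinarith
    have h23 : μ - (γ:ℝ) ≠ 0 := by
      rw [hμval]
      intro h
      have := congrArg Complex.re h
      simp [Complex.mul_re] at this
      nlinarith
    have d12 : (lam + μ) * ((h0 l:ℝ):ℂ) + ((h1 l:ℝ):ℂ) = 0 := by
      apply mul_left_cancel₀ h12
      linear_combination e1 - e2
    have d13 : (lam + (γ:ℝ)) * ((h0 l:ℝ):ℂ) + ((h1 l:ℝ):ℂ) = 0 := by
      apply mul_left_cancel₀ h13
      linear_combination e1 - e3
    have dfin : (μ - (γ:ℝ)) * ((h0 l:ℝ):ℂ) = 0 := by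
      linear_combination d12 - d13
    have : ((h0 l:ℝ):ℂ) = 0 := by
      rcases mul_eq_zero.mp dfin with h | h
      · exact absurd h h23
      · exact h
    exact_mod_cast this
  · intro l
    have c0 := congrArg Complex.ofReal (R0 l)
    have c1 := congrArg Complex.ofReal (R1 l)
    have cc := congrArg Complex.ofReal (Rc l)
    push_cast at c0 c1 cc
    rw [hzdef]
    push_cast
    linear_combination lam^2 * c0 + lam * c1 + cc
      + ((qtail p l : ℂ) * ((h0 l:ℝ):ℂ) - (qtail p (l+1) : ℂ) * ((h0 (l+1):ℝ):ℂ)) * hlam3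
lemma solve_s4 {p : ℕ → ℝ} (hp : ∀ k, 0 < p k) (hsp : Summable p)
    {β₁ γ : ℝ} (hγ1 : 1 ≤ γ) (hγpow : γ ^ 4 = β₁) {h0 h1 h2 h3 : ℕ → ℝ}
    (m0 : memDAR p h0) (m1 : memDAR p h1) (m2 : memDAR p h2) (m3 : memDAR p h3)
    (R0 : ∀ l, qtail p l * h1 l = p l * h0 l + qtail p (l+1) * h1 (l+1))
    (R1 : ∀ l, qtail p l * h2 l = p l * h1 l + qtail p (l+1) * h2 (l+1))
    (R2 : ∀ l, qtail p l * h3 l = p l * h2 l + qtail p (l+1) * h3 (l+1))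
    (Rc : ∀ l, qtail p l * (β₁ * h0 l) = p l * h3 l + qtail p (l+1) * (β₁ * h0 (l+1)))
    (G : ∀ l, γ^3 * h0 l + γ^2 * h1 l + γ * h2 l + h3 l = 0) : ∀ l, h0 l = 0 := by
  have hγ0 : (0:ℝ) < γ := lt_of_lt_of_le one_pos hγ1
  have hγc0 : ((γ:ℝ):ℂ) ≠ 0 := by exact_mod_cast hγ0.ne'
  have hγ4c : ((γ:ℝ):ℂ) ^ 4 = ((β₁:ℝ):ℂ) := by exact_mod_cast congrArg Complex.ofReal hγpow
  set x1 : ℂ := (γ:ℝ) * Complex.I with hx1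
  have hlam4 : x1 ^ 4 = ((β₁:ℝ):ℂ) := by
    rw [hx1]
    linear_combination Complex.I^4 * hγ4c + ((β₁:ℝ):ℂ) * (Complex.I^2 - 1) * Complex.I_sq
  have hx1ne : x1 ≠ 0 := by
    rw [hx1]; exact mul_ne_zero hγc0 Complex.I_ne_zero
  have hx1re : x1.re ≤ 0 := by
    rw [hx1]; simp [Complex.mul_re]
  -- complex eigenfunction for x1
  set z : ℕ → ℂ := fun l =>
      x1^3 * ((h0 l : ℝ):ℂ) + x1^2 * ((h1 l : ℝ):ℂ) + x1 * ((h2 l : ℝ):ℂ) + ((h3 l : ℝ):ℂ)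
    with hzdef
  have hzsum : Summable fun k => p k * Complex.abs (z k) := by
    apply summable_p_abs_add hp
    apply summable_p_abs_add hp
    apply summable_p_abs_add hp
    · exact summable_p_abs_smul _ (ofReal_memDAR_summable m0)
    · exact summable_p_abs_smul _ (ofReal_memDAR_summable m1)
    · exact summable_p_abs_smul _ (ofReal_memDAR_summable m2)
    · exact ofReal_memDAR_summable m3
  have hrec1 : ∀ l, (qtail p l : ℂ) * x1 * z l
      = (p l : ℂ) * z l + (qtail p (l+1) : ℂ) * x1 * z (l+1) := by
    intro l
    have c0 := congrArg Complex.ofReal (R0 l)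
    have c1 := congrArg Complex.ofReal (R1 l)
    have c2 := congrArg Complex.ofReal (R2 l)
    have cc := congrArg Complex.ofReal (Rc l)
    push_cast at c0 c1 c2 cc
    rw [hzdef]
    push_cast
    linear_combination x1^3 * c0 + x1^2 * c1 + x1 * c2 + cc
      + ((qtail p l : ℂ) * ((h0 l:ℝ):ℂ) - (qtail p (l+1) : ℂ) * ((h0 (l+1):ℝ):ℂ)) * hlam4
  have hzero := eigen_zero hp hsp x1 hx1ne hx1re z hzsum hrec1
  -- real eigenfunction for -γ
  have mw : memDAR p (fun l => -(γ^3) * h0 l + γ^2 * h1 l + (-γ * h2 l + h3 l)) := by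
    have ha : memDAR p (fun l => (-(γ^3)) * h0 l + (γ^2) * h1 l + 0) :=
      memDAR_comb hp hsp m0 m1 _ _ 0
    have hb : memDAR p (fun l => (-γ) * h2 l + 1 * h3 l + 0) :=
      memDAR_comb hp hsp m2 m3 _ _ 0
    refine memDAR_congr (fun k => by ring) (?_ : memDAR p
      (fun l => ((-(γ^3)) * h0 l + (γ^2) * h1 l + 0) + ((-γ) * h2 l + 1 * h3 l + 0)))
    unfold memDAR at ha hb ⊢
    refine Summable.of_nonneg_of_le (fun k => mul_nonneg (hp k).le (abs_nonneg _))
      (fun k => ?_) (ha.add hb)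
    rw [← mul_add]
    apply mul_le_mul_of_nonneg_left _ (hp k).le
    exact abs_add_le _ _
  have hrec3 : ∀ l, (qtail p l : ℂ) * (-(γ:ℂ)) * ((-(γ^3) * h0 l + γ^2 * h1 l + (-γ * h2 l + h3 l) : ℝ) : ℂ)
      = (p l : ℂ) * ((-(γ^3) * h0 l + γ^2 * h1 l + (-γ * h2 l + h3 l) : ℝ) : ℂ)
        + (qtail p (l+1) : ℂ) * (-(γ:ℂ)) * ((-(γ^3) * h0 (l+1) + γ^2 * h1 (l+1) + (-γ * h2 (l+1) + h3 (l+1)) : ℝ) : ℂ) := by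
    intro l
    have c0 := congrArg Complex.ofReal (R0 l)
    have c1 := congrArg Complex.ofReal (R1 l)
    have c2 := congrArg Complex.ofReal (R2 l)
    have cc := congrArg Complex.ofReal (Rc l)
    push_cast at c0 c1 c2 cc
    push_cast
    linear_combination (-(γ:ℂ))^3 * c0 + (-(γ:ℂ))^2 * c1 + (-(γ:ℂ)) * c2 + cc
      + ((qtail p l : ℂ) * ((h0 l:ℝ):ℂ) - (qtail p (l+1) : ℂ) * ((h0 (l+1):ℝ):ℂ)) * hγ4c
  have hzero3 := eigen_zero hp hsp (-(γ:ℂ)) (by simpa using hγc0)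
      (by simp [hγ0.le])
      (fun l => ((-(γ^3) * h0 l + γ^2 * h1 l + (-γ * h2 l + h3 l) : ℝ) : ℂ))
      (ofReal_memDAR_summable mw) hrec3
  -- elimination
  intro l
  have e1 := hzero l
  have e2 := congrArg (starRingEnd ℂ) (hzero l)
  rw [hzdef] at e1 e2
  simp only [map_add, map_mul, map_pow, Complex.conj_ofReal, map_zero] at e2
  have hconj : (starRingEnd ℂ) x1 = -x1 := by
    rw [hx1]
    simp [map_mul, Complex.conj_ofReal, Complex.conj_I]
  rw [hconj] at e2
  have e3 : (-(γ:ℂ))^3 * ((h0 l:ℝ):ℂ) + (-(γ:ℂ))^2 * ((h1 l:ℝ):ℂ)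
      + (-(γ:ℂ)) * ((h2 l:ℝ):ℂ) + ((h3 l:ℝ):ℂ) = 0 := by
    have e3c := hzero3 l
    push_cast at e3c ⊢
    linear_combination e3c
  have e4 : ((γ:ℝ):ℂ)^3 * ((h0 l:ℝ):ℂ) + ((γ:ℝ):ℂ)^2 * ((h1 l:ℝ):ℂ)
      + ((γ:ℝ):ℂ) * ((h2 l:ℝ):ℂ) + ((h3 l:ℝ):ℂ) = 0 := by
    exact_mod_cast congrArg Complex.ofReal (G l)
  -- nodes: x1 = γI, x2 = -γI, x3 = -γ, x4 = γ
  have hIne : (Complex.I - 1) ≠ 0 := by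
    intro h
    have := congrArg Complex.im h
    simp at this
  have hIpne : (Complex.I + 1) ≠ 0 := by
    intro h
    have := congrArg Complex.im h
    simp at this
  have h12 : x1 - (-x1) ≠ 0 := by
    simpa using hx1ne
  have h13 : x1 - (-(γ:ℂ)) ≠ 0 := by
    rw [hx1]
    intro h
    apply hγc0
    have : ((γ:ℝ):ℂ) * (Complex.I + 1) = 0 := by linear_combination h
    rcases mul_eq_zero.mp this with h' | h'
    · exact h'
    · exact absurd h' hIpne
  have h14 : x1 - (γ:ℂ) ≠ 0 := by
    rw [hx1]
    intro h
    apply hγc0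
    have : ((γ:ℝ):ℂ) * (Complex.I - 1) = 0 := by linear_combination h
    rcases mul_eq_zero.mp this with h' | h'
    · exact h'
    · exact absurd h' hIne
  have h23 : (-x1) - (-(γ:ℂ)) ≠ 0 := by
    rw [hx1]
    intro h
    apply hγc0
    have : ((γ:ℝ):ℂ) * (Complex.I - 1) = 0 := by linear_combination -h
    rcases mul_eq_zero.mp this with h' | h'
    · exact h'
    · exact absurd h' hIne
  have h24 : (-x1) - (γ:ℂ) ≠ 0 := by
    rw [hx1]
    intro h
    apply hγc0
    have : ((γ:ℝ):ℂ) * (Complex.I + 1) = 0 := by linear_combination -h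
    rcases mul_eq_zero.mp this with h' | h'
    · exact h'
    · exact absurd h' hIpne
  have h34 : (-(γ:ℂ)) - (γ:ℂ) ≠ 0 := by
    intro h
    apply hγc0
    have : ((γ:ℝ):ℂ) * (-2) = 0 := by linear_combination h
    rcases mul_eq_zero.mp this with h' | h'
    · exact h'
    · norm_num at h'
  set y0 : ℂ := ((h0 l:ℝ):ℂ) with hy0
  set y1 : ℂ := ((h1 l:ℝ):ℂ) with hy1
  set y2 : ℂ := ((h2 l:ℝ):ℂ) with hy2
  set y3 : ℂ := ((h3 l:ℝ):ℂ) with hy3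
  have d12 : (x1^2 + x1*(-x1) + (-x1)^2) * y0 + (x1 + (-x1)) * y1 + y2 = 0 := by
    apply mul_left_cancel₀ h12
    linear_combination e1 - e2
  have d13 : (x1^2 + x1*(-(γ:ℂ)) + (-(γ:ℂ))^2) * y0 + (x1 + (-(γ:ℂ))) * y1 + y2 = 0 := by
    apply mul_left_cancel₀ h13
    linear_combination e1 - e3
  have d14 : (x1^2 + x1*((γ:ℝ):ℂ) + ((γ:ℝ):ℂ)^2) * y0 + (x1 + ((γ:ℝ):ℂ)) * y1 + y2 = 0 := by
    apply mul_left_cancel₀ h14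
    linear_combination e1 - e4
  have f1 : (x1 + (-x1) + (-(γ:ℂ))) * y0 + y1 = 0 := by
    apply mul_left_cancel₀ h23
    linear_combination d12 - d13
  have f2 : (x1 + (-x1) + ((γ:ℝ):ℂ)) * y0 + y1 = 0 := by
    apply mul_left_cancel₀ h24
    linear_combination d12 - d14
  have dfin : ((-(γ:ℂ)) - ((γ:ℝ):ℂ)) * y0 = 0 := by
    linear_combination f1 - f2
  have : y0 = 0 := by
    rcases mul_eq_zero.mp dfin with h | h
    · exact absurd h h34
    · exact h
  rw [hy0] at this
  exact_mod_cast this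

/-- For `s ∈ {1,2,3,4}`, linearity `(A^s id)(l) = β₀ + β₁ l` with `β₁ ≥ 1`, `β₀ > 0`
implies linearity of the adjacent regression: `(A id)(l) = γ₀ + γ₁ l` with
`γ₁ = β₁^{1/s}` and `γ₀ = β₀ / Σ_{k=0}^{s−1} γ₁^k`. -/
theorem adjacent_linearity_of_nonadjacent
    (p : ℕ → ℝ) (hp : ∀ k, 0 < p k) (hsum : HasSum p 1)
    (s : ℕ) (hs : s = 1 ∨ s = 2 ∨ s = 3 ∨ s = 4) (β₀ β₁ : ℝ)
    (hβ₁ : 1 ≤ β₁) (hβ₀ : 0 < β₀)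
    (hid : memDAiterR p s (fun k => (k : ℝ)))
    (hlin : ∀ l : ℕ, ((opAR p)^[s] (fun k => (k : ℝ))) l = β₀ + β₁ * l) :
    ∀ l : ℕ, opAR p (fun k => (k : ℝ)) l =
      β₀ / (∑ k ∈ Finset.range s, (β₁ ^ ((1 : ℝ) / s)) ^ k) +
        β₁ ^ ((1 : ℝ) / s) * l := by
  have hsp : Summable p := hsum.summable
  have hs1 : 1 ≤ s := by rcases hs with h|h|h|h <;> omega
  have hβ₁0 : (0:ℝ) < β₁ := lt_of_lt_of_le one_pos hβ₁
  set γ : ℝ := β₁ ^ ((1:ℝ)/s) with hγdef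
  have hγ1 : 1 ≤ γ := Real.one_le_rpow hβ₁ (by positivity)
  have hγpow : γ ^ s = β₁ := by
    rw [hγdef, one_div]
    exact Real.rpow_inv_natCast_pow hβ₁0.le (by omega)
  set σ : ℝ := ∑ k ∈ Finset.range s, γ ^ k with hσdef
  have hσpos : 0 < σ := by
    rw [hσdef]
    exact Finset.sum_pos (fun i _ => by positivity) (Finset.nonempty_range_iff.2 (by omega))
  set γ₀ : ℝ := β₀ / σ with hγ₀def
  have hγ₀σ : γ₀ * σ = β₀ := by rw [hγ₀def]; field_simp
  have hgs : (γ - 1) * σ = β₁ - 1 := by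
    have h := geom_sum_mul γ s
    rw [hσdef]
    linear_combination h + hγpow
  clear_value γ σ γ₀
  have memid : memDAR p (fun k => (k:ℝ)) := hid 0 (by omega)
  have hmemu : ∀ j, j ≤ s → memDAR p ((opAR p)^[j] (fun k => (k:ℝ))) := by
    intro j hj
    rcases lt_or_eq_of_le hj with h|h
    · exact hid j h
    · subst h
      have haff : memDAR p (fun k => β₁ * (k:ℝ) + 0 * (k:ℝ) + β₀) :=
        memDAR_comb hp hsp memid memid β₁ 0 β₀
      refine memDAR_congr (fun k => ?_) haff
      rw [hlin k]; ring
  set hfun : ℕ → ℕ → ℝ := fun j l =>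
    (opAR p)^[j+1] (fun k => (k:ℝ)) l - γ₀ - γ * (opAR p)^[j] (fun k => (k:ℝ)) l with hhfun
  have memh : ∀ j, j + 1 ≤ s → memDAR p (hfun j) := by
    intro j hj
    have := memDAR_comb hp hsp (hmemu (j+1) hj) (hmemu j (by omega)) 1 (-γ) (-γ₀)
    refine memDAR_congr (fun k => ?_) this
    rw [hhfun]; ring
  have hAh : ∀ j, j + 1 ≤ s → ∀ l, opAR p (hfun j) l = hfun (j+1) l := by
    intro j hj l
    have e : hfun j = fun k => 1 * (opAR p)^[j+1] (fun k => (k:ℝ)) k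
        + (-γ) * (opAR p)^[j] (fun k => (k:ℝ)) k + (-γ₀) := by
      funext k; rw [hhfun]; ring
    rw [e, opAR_comb hp hsp (hmemu (j+1) hj) (hmemu j (by omega)) 1 (-γ) (-γ₀) l, hhfun]
    simp only []
    rw [← Function.iterate_succ_apply' (opAR p) (j+1), ← Function.iterate_succ_apply' (opAR p) j]
    ring
  have Rj : ∀ j, j + 1 ≤ s → ∀ l, qtail p l * hfun (j+1) l
      = p l * hfun j l + qtail p (l+1) * hfun (j+1) (l+1) := by
    intro j hj l
    have h := opAR_split hp hsp (memh j hj) l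
    rw [hAh j hj l, hAh j hj (l+1)] at h
    exact h
  have hu1 : ∀ l, (opAR p)^[s+1] (fun k => (k:ℝ)) l = β₀ + β₁ * opAR p (fun k => (k:ℝ)) l := by
    intro l
    have e : (opAR p)^[s] (fun k => (k:ℝ)) = fun k : ℕ => β₁ * (k:ℝ) + 0 * (k:ℝ) + β₀ := by
      funext k; rw [hlin k]; ring
    rw [Function.iterate_succ_apply' (opAR p) s, e,
      opAR_comb hp hsp memid memid β₁ 0 β₀ l]
    ring
  have hcycle : ∀ l, hfun s l = β₁ * hfun 0 l := by
    intro l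
    rw [hhfun]
    simp only [Function.iterate_one, Function.iterate_zero_apply, zero_add]
    rw [hu1 l, hlin l]
    linear_combination (γ - 1) * hγ₀σ - γ₀ * hgs
  suffices hkey : ∀ l, hfun 0 l = 0 by
    intro l
    have hk := hkey l
    rw [hhfun] at hk
    simp only [Function.iterate_one, Function.iterate_zero_apply, zero_add] at hk
    linarith
  obtain ⟨t, rfl⟩ : ∃ t, s = t + 1 := ⟨s-1, by omega⟩
  have Rc : ∀ l, qtail p l * (β₁ * hfun 0 l)
      = p l * hfun t l + qtail p (l+1) * (β₁ * hfun 0 (l+1)) := by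
    intro l
    have h := Rj t (le_refl _) l
    rw [hcycle l, hcycle (l+1)] at h
    exact h
  rcases hs with h|h|h|h
  · -- s = 1
    have ht : t = 0 := by omega
    subst ht
    intro l
    have hσ' : σ = 1 := by rw [hσdef]; simp
    have hγ' : γ = β₁ := by simpa using hγpow
    have h1 := hlin l
    simp only [zero_add, Function.iterate_one] at h1
    rw [hhfun]
    simp only [Function.iterate_one, Function.iterate_zero_apply, zero_add]
    linear_combination h1 - (l:ℝ) * hγ' - hγ₀σ + γ₀ * hσ'
  · -- s = 2
    have ht : t = 1 := by omega
    subst ht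
    have hσ' : σ = 1 + γ := by rw [hσdef]; rw [Finset.sum_range_succ, Finset.sum_range_one]; ring
    have hγ2 : γ ^ 2 = β₁ := hγpow
    have G : ∀ l, γ * hfun 0 l + hfun 1 l = 0 := by
      intro l
      rw [hhfun]
      simp only [Function.iterate_one, Function.iterate_zero_apply, zero_add]
      have h2 := hlin l
      linear_combination h2 - (l:ℝ) * hγ2 - hγ₀σ + γ₀ * hσ'
    exact solve_s2 hp hsp hγ1 hγ2 (memh 0 (by omega)) (memh 1 (by omega))
      (Rj 0 (by omega)) Rc G
  · -- s = 3
    have ht : t = 2 := by omega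
    subst ht
    have hσ' : σ = 1 + γ + γ^2 := by
      rw [hσdef]; rw [Finset.sum_range_succ, Finset.sum_range_succ, Finset.sum_range_one]; ring
    have hγ3 : γ ^ 3 = β₁ := hγpow
    have G : ∀ l, γ^2 * hfun 0 l + γ * hfun 1 l + hfun 2 l = 0 := by
      intro l
      rw [hhfun]
      simp only [Function.iterate_one, Function.iterate_zero_apply, zero_add]
      have h2 := hlin l
      linear_combination h2 - (l:ℝ) * hγ3 - hγ₀σ + γ₀ * hσ'
    exact solve_s3 hp hsp hγ1 hγ3 (memh 0 (by omega)) (memh 1 (by omega)) (memh 2 (by omega))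
      (Rj 0 (by omega)) (Rj 1 (by omega)) Rc G
  · -- s = 4
    have ht : t = 3 := by omega
    subst ht
    have hσ' : σ = 1 + γ + γ^2 + γ^3 := by
      rw [hσdef]
      rw [Finset.sum_range_succ, Finset.sum_range_succ, Finset.sum_range_succ,
        Finset.sum_range_one]
      ring
    have hγ4 : γ ^ 4 = β₁ := hγpow
    have G : ∀ l, γ^3 * hfun 0 l + γ^2 * hfun 1 l + γ * hfun 2 l + hfun 3 l = 0 := by
      intro l
      rw [hhfun]
      simp only [Function.iterate_one, Function.iterate_zero_apply, zero_add]
      have h2 := hlin l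
      linear_combination h2 - (l:ℝ) * hγ4 - hγ₀σ + γ₀ * hσ'
    exact solve_s4 hp hsp hγ1 hγ4 (memh 0 (by omega)) (memh 1 (by omega)) (memh 2 (by omega))
      (memh 3 (by omega)) (Rj 0 (by omega)) (Rj 1 (by omega)) (Rj 2 (by omega)) Rc G
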